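/- arXiv:2210.00977 — 2 statements merged into one kernel-verified Lean document; each statement's English description precedes it below -/
import Mathlib

section
/- Let Z_1, ..., Z_k be independent exponential random variables with rate 1 and let x_1, ..., x_k be real numbers. Then E[(x_1 Z_1 + ⋯ + x_k Z_k)^{2d}] = (2d)! · h_{2d}(x_1, ..., x_k), where h_{2d} is the complete homogeneous symmetric polynomial of degree 2d. -/
open MeasureTheory ProbabilityTheory

section Aux
open Real Set
open scoped NNReal ENNReal

private noncomputable def expDens (z : ℝ) : ℝ≥0 := if 0 ≤ z then (rexp (-z)).toNNReal else 0

private lemma expMeasure_one_eq : expMeasure 1 =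
    volume.withDensity (fun z => (expDens z : ℝ≥0∞)) := by
  rw [expMeasure, gammaMeasure]
  congr 1
  ext z
  rw [show gammaPDF 1 1 z = exponentialPDF 1 z from rfl, exponentialPDF_eq, expDens]
  by_cases hz : 0 ≤ z <;> simp [hz, ENNReal.ofReal]

private lemma meas_aux : Measurable expDens := by
  apply Measurable.ite measurableSet_Ici _ measurable_const
  exact (measurable_neg.exp).real_toNNReal

private lemma smul_eq_indicator (t : ℕ) : (fun z : ℝ => expDens z • z ^ t)
    = Set.indicator (Ici 0) (fun z => rexp (-z) * z ^ t) := by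
  ext z
  by_cases hz : 0 ≤ z <;>
    simp [expDens, hz, Set.indicator, Real.coe_toNNReal _ (exp_nonneg _), NNReal.smul_def]

private lemma integrable_exp_moment (t : ℕ) : Integrable (fun z => z ^ t) (expMeasure 1) := by
  rw [expMeasure_one_eq, integrable_withDensity_iff_integrable_smul meas_aux]
  rw [smul_eq_indicator, integrable_indicator_iff measurableSet_Ici]
  rw [integrableOn_Ici_iff_integrableOn_Ioi]
  have h := Real.GammaIntegral_convergent (s := t + 1) (by positivity)
  refine h.congr_fun (fun z hz => ?_) measurableSet_Ioi
  rw [add_sub_cancel_right]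
  beta_reduce
  rw [rpow_natCast]

private lemma integral_exp_moment (t : ℕ) :
    ∫ z, z ^ t ∂(expMeasure 1) = (t.factorial : ℝ) := by
  rw [expMeasure_one_eq, integral_withDensity_eq_integral_smul meas_aux]
  rw [smul_eq_indicator, integral_indicator measurableSet_Ici, integral_Ici_eq_integral_Ioi]
  have hG := Real.Gamma_eq_integral (s := (t : ℝ) + 1) (by positivity)
  rw [add_sub_cancel_right] at hG
  have : ∫ z in Ioi (0:ℝ), rexp (-z) * z ^ t = ∫ z in Ioi (0:ℝ), rexp (-z) * z ^ (t : ℝ) := by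
    refine setIntegral_congr_fun measurableSet_Ioi (fun z hz => ?_)
    rw [rpow_natCast]
  rw [this, ← hG]
  exact_mod_cast Real.Gamma_nat_eq_factorial t

private lemma piAntidiag_eq (k m : ℕ) :
    (Finset.univ : Finset (Fin k)).piAntidiag m = Finset.Nat.antidiagonalTuple k m := by
  ext ℓ
  simp [Finset.mem_piAntidiag, Finset.Nat.mem_antidiagonalTuple]

end Aux

/-- The complete homogeneous symmetric polynomial of degree `d` in `k` real variables. -/
noncomputable def hSym (k d : ℕ) (x : Fin k → ℝ) : ℝ :=
  ∑ ℓ ∈ Finset.Nat.antidiagonalTuple k d, ∏ i, x i ^ ℓ i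

/-- If `Z_1, …, Z_k` are i.i.d. rate-1 exponential random variables, then
`E[(x_1 Z_1 + ⋯ + x_k Z_k)^{2d}] = (2d)! ⬝ h_{2d}(x_1, …, x_k)`. -/
theorem integral_exponential_pow_eq_hSym (k d : ℕ) (x : Fin k → ℝ) :
    ∫ z : Fin k → ℝ, (∑ i, x i * z i) ^ (2 * d)
        ∂(Measure.pi fun _ : Fin k => expMeasure 1) =
      (Nat.factorial (2 * d) : ℝ) * hSym k (2 * d) x := by
  letI : MeasureSpace ℝ := ⟨expMeasure 1⟩
  haveI : IsProbabilityMeasure (volume : Measure ℝ) := isProbabilityMeasure_expMeasure one_pos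
  set m := 2 * d with hm
  have hmeas : Measure.pi (fun _ : Fin k => expMeasure 1) = (volume : Measure (Fin k → ℝ)) :=
    (volume_pi).symm
  rw [hmeas]
  have hexp : ∀ z : Fin k → ℝ, (∑ i, x i * z i) ^ m =
      ∑ ℓ ∈ (Finset.univ : Finset (Fin k)).piAntidiag m,
        (Nat.multinomial Finset.univ ℓ : ℝ) * ∏ i, (x i * z i) ^ ℓ i := fun z =>
    Finset.sum_pow_eq_sum_piAntidiag Finset.univ (fun i => x i * z i) m
  simp_rw [hexp]
  have hint : ∀ ℓ : Fin k → ℕ, Integrable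
      (fun z : Fin k → ℝ => (Nat.multinomial Finset.univ ℓ : ℝ) * ∏ i, (x i * z i) ^ ℓ i)
      (volume : Measure (Fin k → ℝ)) := by
    intro ℓ
    refine Integrable.const_mul ?_ _
    refine Integrable.fintype_prod (f := fun i t => (x i * t) ^ ℓ i) (fun i => ?_)
    simp_rw [mul_pow]
    exact (integrable_exp_moment (ℓ i)).const_mul _
  rw [integral_finset_sum _ (fun ℓ _ => hint ℓ)]
  have hterm : ∀ ℓ ∈ (Finset.univ : Finset (Fin k)).piAntidiag m,
      ∫ z : Fin k → ℝ, (Nat.multinomial Finset.univ ℓ : ℝ) * ∏ i, (x i * z i) ^ ℓ i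
        = (m.factorial : ℝ) * ∏ i, x i ^ ℓ i := by
    intro ℓ hℓ
    rw [integral_const_mul,
      integral_fintype_prod_volume_eq_prod (ι := Fin k) (fun i t => (x i * t) ^ ℓ i)]
    have : ∀ i : Fin k, ∫ t : ℝ, (x i * t) ^ ℓ i = x i ^ ℓ i * ((ℓ i).factorial : ℝ) := by
      intro i
      simp_rw [mul_pow]
      rw [integral_const_mul]
      exact congrArg _ (integral_exp_moment (ℓ i))
    rw [Finset.prod_congr rfl (fun i _ => this i), Finset.prod_mul_distrib]
    have hsum : ∑ i, ℓ i = m := (Finset.mem_piAntidiag.mp hℓ).1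
    have hfac : (Nat.multinomial Finset.univ ℓ : ℝ) * ∏ i, ((ℓ i).factorial : ℝ)
        = (m.factorial : ℝ) := by
      rw [← hsum, ← Nat.multinomial_spec Finset.univ ℓ]
      push_cast
      ring
    rw [← mul_assoc, mul_comm ((Nat.multinomial Finset.univ ℓ : ℝ)), mul_assoc, hfac]
    ring
  rw [Finset.sum_congr rfl hterm, ← Finset.mul_sum, hSym, piAntidiag_eq]
end

section
/- Let k ≥ 1 be an integer and let x_1, ..., x_k be real numbers with mean x̄. If y_1, ..., y_k and x_1, ..., x_k satisfy that (x_1, ..., x_k) majorises (y_1, ..., y_k) (both sorted in decreasing order, partial sums of x dominate those of y, with equal total sums), then h_{2d}(x_1, ..., x_k) ≥ h_{2d}(y_1, ..., y_k) for every integer d ≥ 1 (Schur convexity of complete homogeneous symmetric polynomials of even degree). -/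
open MeasureTheory Real Set Nat

/-! ### An exponential-moment measure, used to prove Hunter's theorem:
nonnegativity of even-degree complete homogeneous symmetric polynomials. -/

noncomputable def expW : ℝ → NNReal :=
  fun t => Real.toNNReal (Set.indicator (Set.Ioi 0) (fun t => Real.exp (-t)) t)

lemma expW_meas : Measurable expW :=
  ((measurable_exp.comp measurable_neg).indicator measurableSet_Ioi).real_toNNReal

lemma expW_coe (t : ℝ) : (expW t : ℝ) = Set.indicator (Set.Ioi 0) (fun t => Real.exp (-t)) t :=
  Real.coe_toNNReal _ (Set.indicator_nonneg (fun x _ => (Real.exp_pos _).le) t)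

noncomputable def eMeas : Measure ℝ := volume.withDensity fun t => (expW t : ENNReal)

lemma eMeas_smul_eq_indicator (n : ℕ) (t : ℝ) :
    expW t • (t ^ n) = Set.indicator (Set.Ioi 0) (fun s => Real.exp (-s) * s ^ n) t := by
  rw [NNReal.smul_def, smul_eq_mul, expW_coe]
  by_cases h : t ∈ Set.Ioi 0 <;> simp [h]

lemma eMeas_moment (n : ℕ) : ∫ t, t ^ n ∂eMeas = (n ! : ℝ) := by
  rw [eMeas, integral_withDensity_eq_integral_smul expW_meas]
  calc ∫ t, expW t • t ^ n = ∫ t, Set.indicator (Set.Ioi 0) (fun s => Real.exp (-s) * s ^ n) t := by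
        simp_rw [eMeas_smul_eq_indicator]
    _ = ∫ t in Set.Ioi 0, Real.exp (-t) * t ^ n := integral_indicator measurableSet_Ioi
    _ = ∫ t in Set.Ioi 0, Real.exp (-t) * t ^ (((n : ℝ) + 1) - 1) := by
        refine setIntegral_congr_fun measurableSet_Ioi (fun s hs => ?_)
        rw [add_sub_cancel_right, Real.rpow_natCast]
    _ = Real.Gamma ((n : ℝ) + 1) := (Real.Gamma_eq_integral (by positivity)).symm
    _ = (n ! : ℝ) := Real.Gamma_nat_eq_factorial n

lemma eMeas_integrable (n : ℕ) : Integrable (fun t => t ^ n) eMeas := by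
  rw [eMeas, integrable_withDensity_iff_integrable_smul expW_meas]
  have : (fun t : ℝ => expW t • t ^ n)
      = Set.indicator (Set.Ioi 0) (fun s => Real.exp (-s) * s ^ n) := by
    funext t; exact eMeas_smul_eq_indicator n t
  rw [this]
  refine (IntegrableOn.integrable_indicator ?_ measurableSet_Ioi)
  have h := Real.GammaIntegral_convergent (s := (n : ℝ) + 1) (by positivity)
  refine h.congr_fun (fun s hs => ?_) measurableSet_Ioi
  rw [add_sub_cancel_right]; simp only [Real.rpow_natCast]

instance : IsFiniteMeasure eMeas := by
  constructor
  rw [eMeas, withDensity_apply _ MeasurableSet.univ, Measure.restrict_univ]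
  calc ∫⁻ t, (expW t : ENNReal) ≤ ∫⁻ t, ProbabilityTheory.exponentialPDF 1 t := by
        refine lintegral_mono (fun t => ?_)
        rw [ProbabilityTheory.exponentialPDF_eq]
        show ENNReal.ofReal _ ≤ _
        refine ENNReal.ofReal_le_ofReal ?_
        by_cases h : t ∈ Set.Ioi 0
        · simp only [Set.indicator_of_mem h]
          rw [if_pos (le_of_lt h)]; simp
        · simp only [Set.indicator_of_notMem h]
          split <;> positivity
    _ = 1 := ProbabilityTheory.lintegral_exponentialPDF_eq_one one_pos
  exact ENNReal.one_lt_top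

def Xp : Type := ℝ
instance : MeasurableSpace Xp := inferInstanceAs (MeasurableSpace ℝ)
noncomputable instance : MeasureSpace Xp := @MeasureSpace.mk Xp instMeasurableSpaceXp eMeas
instance : IsFiniteMeasure (volume : Measure Xp) := inferInstanceAs (IsFiniteMeasure eMeas)

def Xp.toR : Xp → ℝ := fun t => t

lemma Xp.integrable (n : ℕ) : Integrable (fun t : Xp => Xp.toR t ^ n) volume := eMeas_integrable n
lemma Xp.moment (n : ℕ) : ∫ t : Xp, Xp.toR t ^ n = (n ! : ℝ) := eMeas_moment n

theorem key_rep (k n : ℕ) (x : Fin k → ℝ) :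
    ∫ t : Fin k → Xp, (∑ i, x i * Xp.toR (t i)) ^ n
      = (n ! : ℝ) * ∑ ℓ ∈ Finset.Nat.antidiagonalTuple k n, ∏ i, x i ^ ℓ i := by
  have expand : ∀ t : Fin k → Xp, (∑ i, x i * Xp.toR (t i)) ^ n
      = ∑ a ∈ Finset.univ.piAntidiag n,
          ((Nat.multinomial Finset.univ a : ℝ) * ∏ i, x i ^ a i) * ∏ i, Xp.toR (t i) ^ a i := by
    intro t
    rw [Finset.sum_pow_eq_sum_piAntidiag]
    refine Finset.sum_congr rfl (fun a _ => ?_)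
    rw [mul_assoc]
    congr 1
    rw [← Finset.prod_mul_distrib]
    exact Finset.prod_congr rfl (fun i _ => mul_pow _ _ _)
  simp_rw [expand]
  rw [integral_finset_sum]
  · have term : ∀ a ∈ Finset.univ.piAntidiag n,
        (∫ t : Fin k → Xp,
            ((Nat.multinomial Finset.univ a : ℝ) * ∏ i, x i ^ a i) * ∏ i, Xp.toR (t i) ^ a i)
          = (n ! : ℝ) * ∏ i, x i ^ a i := by
      intro a ha
      rw [integral_const_mul, volume_pi, integral_fintype_prod_eq_prod (ι := Fin k)
        (f := fun i (s : Xp) => Xp.toR s ^ a i)]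
      simp_rw [Xp.moment]
      rw [Finset.mem_piAntidiag] at ha
      have hspec : (∏ i, ((a i)! : ℝ)) * (Nat.multinomial Finset.univ a : ℝ) = (n ! : ℝ) := by
        rw [← Nat.cast_prod, ← Nat.cast_mul, Nat.multinomial_spec, ha.1]
      calc ((Nat.multinomial Finset.univ a : ℝ) * ∏ i, x i ^ a i) * ∏ i, ((a i)! : ℝ)
          = ((∏ i, ((a i)! : ℝ)) * (Nat.multinomial Finset.univ a : ℝ)) * ∏ i, x i ^ a i := by ring
        _ = (n ! : ℝ) * ∏ i, x i ^ a i := by rw [hspec]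
    rw [Finset.sum_congr rfl term, ← Finset.mul_sum,
      Finset.piAntidiag_univ_fin_eq_antidiagonalTuple n k]
  · intro a ha
    exact (Integrable.fintype_prod (f := fun i (s : Xp) => Xp.toR s ^ a i)
      (fun i => Xp.integrable (a i))).const_mul _

/-- Hunter's theorem: even-degree complete homogeneous symmetric polynomials are nonnegative. -/
theorem hSym_even_nonneg (k m : ℕ) (x : Fin k → ℝ) : 0 ≤ hSym k (2 * m) x := by
  have h := key_rep k (2 * m) x
  have hnn : 0 ≤ ∫ t : Fin k → Xp, (∑ i, x i * Xp.toR (t i)) ^ (2 * m) := by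
    refine integral_nonneg (fun t => ?_)
    rw [pow_mul]
    exact pow_nonneg (sq_nonneg _) m
  rw [h] at hnn
  have hpos : (0:ℝ) < ((2*m)! : ℝ) := by exact_mod_cast Nat.factorial_pos _
  rw [hSym]
  nlinarith [hnn, hpos]

/-! ### A recursive presentation of the complete homogeneous symmetric polynomial over lists. -/

noncomputable def hL : ℕ → List ℝ → ℝ
  | 0, _ => 1
  | _+1, [] => 0
  | n+1, a :: l => hL (n+1) l + a * hL n (a :: l)
termination_by n l => n + l.length

@[simp] lemma hL_zero (l : List ℝ) : hL 0 l = 1 := by cases l <;> simp [hL]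

@[simp] lemma hL_nil (n : ℕ) : hL (n+1) [] = 0 := by simp [hL]

lemma hL_cons (n : ℕ) (a : ℝ) (l : List ℝ) :
    hL (n+1) (a :: l) = hL (n+1) l + a * hL n (a :: l) := by
  rw [hL]

lemma hL_diff (n : ℕ) (a b : ℝ) (l : List ℝ) :
    hL (n+1) (a :: l) - hL (n+1) (b :: l) = (a - b) * hL n (a :: b :: l) := by
  induction n with
  | zero => simp [hL_cons]
  | succ m ih =>
    rw [hL_cons m.succ a l, hL_cons m.succ b l]
    have h1 : hL (m+1) (a :: l) = hL (m+1) (b :: l) + (a - b) * hL m (a :: b :: l) := by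
      linarith [ih]
    rw [hL_cons m a (b :: l), h1]
    ring

lemma hL_swap (n : ℕ) (a b : ℝ) (l : List ℝ) :
    hL n (a :: b :: l) = hL n (b :: a :: l) := by
  induction n using Nat.strong_induction_on with
  | _ n ih =>
    match n with
    | 0 => simp
    | 1 =>
      rw [hL_cons 0 a (b :: l), hL_cons 0 b l, hL_cons 0 b (a :: l), hL_cons 0 a l]
      simp; ring
    | n+2 =>
      rw [hL_cons (n+1) a (b :: l), hL_cons (n+1) b (a :: l),
        hL_cons (n+1) b l, hL_cons (n+1) a l,
        hL_cons n a (b :: l), hL_cons n b (a :: l)]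
      have hd : hL (n+1) (a :: l) = hL (n+1) (b :: l) + (a - b) * hL n (a :: b :: l) := by
        linarith [hL_diff n a b l]
      have hs : hL n (a :: b :: l) = hL n (b :: a :: l) := ih n (by omega)
      rw [hd, ← hs]
      ring

lemma hL_perm {l l' : List ℝ} (h : l.Perm l') : ∀ n, hL n l = hL n l' := by
  induction h with
  | nil => intro n; rfl
  | cons a h ih =>
    intro n
    induction n using Nat.strong_induction_on with
    | _ n ihn =>
      match n with
      | 0 => simp
      | n+1 => rw [hL_cons n a _, hL_cons n a _, ih (n+1)]
               cases n with
               | zero => simp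
               | succ m => rw [ihn (m+1) (by omega)]
  | swap a b l => intro n; exact hL_swap n b a l
  | trans h1 h2 ih1 ih2 => intro n; rw [ih1 n, ih2 n]

lemma hL_cons_sum (n : ℕ) (a : ℝ) (l : List ℝ) :
    hL n (a :: l) = ∑ j ∈ Finset.range (n+1), a ^ j * hL (n - j) l := by
  induction n with
  | zero => simp
  | succ m ih =>
    rw [hL_cons m a l, ih, Finset.sum_range_succ' (fun j => a ^ j * hL (m + 1 - j) l) (m+1)]
    simp only [pow_zero, one_mul, Nat.sub_zero]
    rw [Finset.mul_sum]
    have : ∀ j ∈ Finset.range (m+1), a * (a ^ j * hL (m - j) l)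
        = a ^ (j+1) * hL (m + 1 - (j + 1)) l := by
      intro j hj
      have : m + 1 - (j+1) = m - j := by omega
      rw [this]; ring
    rw [Finset.sum_congr rfl this]
    ring

/-- Key algebraic identity for a Robin Hood transfer on two coordinates. -/
lemma hL_transfer_id (m : ℕ) (a b t : ℝ) (z : List ℝ) :
    hL (m+2) (a :: b :: z)
      = hL (m+2) ((a-t) :: (b+t) :: z)
        + t * (a - b - t) * hL m (a :: (b+t) :: (a-t) :: b :: z) := by
  have e1 : hL (m+2) (a :: b :: z) - hL (m+2) ((a-t) :: b :: z)
      = t * hL (m+1) (a :: (a-t) :: b :: z) := by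
    have h := hL_diff (m+1) a (a-t) (b :: z)
    rw [show a - (a - t) = t from by ring] at h
    exact h
  have e2 : hL (m+2) (b :: (a-t) :: z) - hL (m+2) ((b+t) :: (a-t) :: z)
      = -t * hL (m+1) (b :: (b+t) :: (a-t) :: z) := by
    have h := hL_diff (m+1) b (b+t) ((a-t) :: z)
    rw [show b - (b + t) = -t from by ring] at h
    exact h
  have p1 : hL (m+2) ((a-t) :: b :: z) = hL (m+2) (b :: (a-t) :: z) :=
    hL_perm (List.Perm.swap (a-t) b z).symm (m+2)
  have p2 : hL (m+2) ((b+t) :: (a-t) :: z) = hL (m+2) ((a-t) :: (b+t) :: z) :=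
    hL_perm (List.Perm.swap (a-t) (b+t) z) (m+2)
  have p3 : hL (m+1) (b :: (b+t) :: (a-t) :: z) = hL (m+1) ((b+t) :: (a-t) :: b :: z) := by
    refine hL_perm ?_ (m+1)
    refine ((List.Perm.swap (b+t) b ((a-t) :: z)).trans ?_)
    exact List.Perm.cons (b+t) (List.Perm.swap (a-t) b z)
  have e3 : hL (m+1) (a :: (a-t) :: b :: z) - hL (m+1) ((b+t) :: (a-t) :: b :: z)
      = (a - b - t) * hL m (a :: (b+t) :: (a-t) :: b :: z) := by
    have h := hL_diff m a (b+t) ((a-t) :: b :: z)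
    rw [show a - (b + t) = a - b - t from by ring] at h
    exact h
  linear_combination e1 + p1 + e2 + p2 + t * e3 - t * p3

/-! ### `hSym` agrees with `hL`. -/

lemma adT_succ_sum (k n : ℕ) (x : Fin (k+1) → ℝ) :
    ∑ ℓ ∈ Finset.Nat.antidiagonalTuple (k+1) n, ∏ i, x i ^ ℓ i
      = ∑ j ∈ Finset.range (n+1), x 0 ^ j *
          ∑ ℓ ∈ Finset.Nat.antidiagonalTuple k (n - j), ∏ i, x i.succ ^ ℓ i := by
  simp_rw [Finset.mul_sum]
  rw [Finset.sum_sigma']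
  refine Finset.sum_nbij' (fun ℓ => ⟨ℓ 0, Fin.tail ℓ⟩) (fun p => Fin.cons p.1 p.2) ?_ ?_ ?_ ?_ ?_
  · intro ℓ hℓ
    rw [Finset.Nat.mem_antidiagonalTuple] at hℓ
    rw [Fin.sum_univ_succ] at hℓ
    have htail : ∑ i : Fin k, Fin.tail ℓ i = ∑ i : Fin k, ℓ i.succ := rfl
    refine Finset.mem_sigma.mpr ⟨Finset.mem_range.mpr ?_, ?_⟩
    · show ℓ 0 < n + 1
      omega
    · show Fin.tail ℓ ∈ Finset.Nat.antidiagonalTuple k (n - ℓ 0)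
      rw [Finset.Nat.mem_antidiagonalTuple, htail]
      omega
  · intro p hp
    rw [Finset.mem_sigma, Finset.mem_range, Finset.Nat.mem_antidiagonalTuple] at hp
    rw [Finset.Nat.mem_antidiagonalTuple, Fin.sum_univ_succ]
    have hc0 : (Fin.cons p.1 p.2 : Fin (k+1) → ℕ) 0 = p.1 := rfl
    have hcs : ∑ i : Fin k, (Fin.cons p.1 p.2 : Fin (k+1) → ℕ) i.succ = ∑ i : Fin k, p.2 i := by
      refine Finset.sum_congr rfl (fun i _ => rfl)
    rw [hc0, hcs]
    omega
  · intro ℓ hℓ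
    dsimp only
    exact Fin.cons_self_tail ℓ
  · intro p hp
    simp [Fin.tail_cons]
  · intro ℓ hℓ
    dsimp only
    rw [Fin.prod_univ_succ]
    simp [Fin.tail]

lemma hSym_eq_hL : ∀ (k : ℕ) (n : ℕ) (x : Fin k → ℝ), hSym k n x = hL n (List.ofFn x) := by
  intro k
  induction k with
  | zero =>
    intro n x
    cases n with
    | zero => simp [hSym, hL_zero]
    | succ m => simp [hSym, Finset.Nat.antidiagonalTuple_zero_succ, hL_nil]
  | succ k ih =>
    intro n x
    rw [hSym, adT_succ_sum k n x, List.ofFn_succ, hL_cons_sum]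
    refine Finset.sum_congr rfl (fun j hj => ?_)
    rw [← ih (n - j) (fun i => x i.succ)]
    rfl

lemma hL_even_nonneg (m : ℕ) (l : List ℝ) : 0 ≤ hL (2*m) l := by
  have h := hSym_even_nonneg l.length m l.get
  rwa [hSym_eq_hL, List.ofFn_get] at h

lemma hL_transfer (d : ℕ) (hd : 1 ≤ d) (a b t : ℝ) (ht : 0 ≤ t) (h2 : b + t ≤ a - t)
    (z : List ℝ) : hL (2*d) ((a-t) :: (b+t) :: z) ≤ hL (2*d) (a :: b :: z) := by
  have hm : 2*d = 2*(d-1) + 2 := by omega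
  rw [hm, hL_transfer_id (2*(d-1)) a b t z]
  have h3 := hL_even_nonneg (d-1) (a :: (b+t) :: (a-t) :: b :: z)
  nlinarith [mul_nonneg (mul_nonneg ht (by linarith : (0:ℝ) ≤ a - b - t)) h3]

/-! ### Multiset version. -/

noncomputable def hM (n : ℕ) (m : Multiset ℝ) : ℝ :=
  Quotient.liftOn m (hL n) (fun _ _ h => hL_perm h n)

lemma hM_coe (n : ℕ) (l : List ℝ) : hM n (↑l) = hL n l := rfl

lemma hM_transfer (d : ℕ) (hd : 1 ≤ d) (a b t : ℝ) (ht : 0 ≤ t) (h2 : b + t ≤ a - t)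
    (m : Multiset ℝ) : hM (2*d) ((a-t) ::ₘ (b+t) ::ₘ m) ≤ hM (2*d) (a ::ₘ b ::ₘ m) := by
  induction m using Quotient.inductionOn with
  | _ z =>
    show hM (2*d) (↑((a-t) :: (b+t) :: z)) ≤ hM (2*d) (↑(a :: b :: z))
    rw [hM_coe, hM_coe]
    exact hL_transfer d hd a b t ht h2 z

lemma hSym_eq_hM (k n : ℕ) (x : Fin k → ℝ) :
    hSym k n x = hM n (Multiset.map x Finset.univ.val) := by
  rw [hSym_eq_hL]
  have huniv : (Finset.univ.val : Multiset (Fin k)) = ↑(List.finRange k) := by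
    rfl
  rw [huniv]
  rw [show (Multiset.map x ↑(List.finRange k)) = ↑((List.finRange k).map x) from rfl]
  rw [hM_coe, ← List.ofFn_eq_map]

lemma hSym_transfer (k d : ℕ) (hd : 1 ≤ d) (x x' : Fin k → ℝ) (i j : Fin k) (hij : i ≠ j)
    (t : ℝ) (ht : 0 ≤ t) (h2 : x j + t ≤ x i - t)
    (hxi : x' i = x i - t) (hxj : x' j = x j + t)
    (hother : ∀ m, m ≠ i → m ≠ j → x' m = x m) :
    hSym k (2*d) x' ≤ hSym k (2*d) x := by
  rw [hSym_eq_hM, hSym_eq_hM]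
  have hnd : (Finset.univ.val : Multiset (Fin k)).Nodup := Finset.univ.nodup
  have himem : i ∈ (Finset.univ.val : Multiset (Fin k)) := Finset.mem_univ i
  have hjmem : j ∈ (Finset.univ.val : Multiset (Fin k)).erase i :=
    (Multiset.mem_erase_of_ne hij.symm).mpr (Finset.mem_univ j)
  set s : Multiset (Fin k) := ((Finset.univ.val : Multiset (Fin k)).erase i).erase j with hs
  have hdecomp : (Finset.univ.val : Multiset (Fin k)) = i ::ₘ j ::ₘ s := by
    rw [hs, Multiset.cons_erase hjmem, Multiset.cons_erase himem]
  have hinot : i ∉ s := by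
    intro hmem
    exact hnd.not_mem_erase (Multiset.mem_of_mem_erase hmem)
  have hjnot : j ∉ s := (hnd.erase i).not_mem_erase
  have hmapeq : Multiset.map x' s = Multiset.map x s := by
    refine Multiset.map_congr rfl (fun a ha => ?_)
    exact hother a (fun h => hinot (h ▸ ha)) (fun h => hjnot (h ▸ ha))
  rw [hdecomp, Multiset.map_cons, Multiset.map_cons, Multiset.map_cons, Multiset.map_cons,
    hxi, hxj, hmapeq]
  exact hM_transfer d hd (x i) (x j) t ht h2 _

/-! ### The majorization induction. -/

set_option maxHeartbeats 2000000 in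
theorem schur_aux (k d : ℕ) (hd : 1 ≤ d) :
    ∀ N : ℕ, ∀ x y : Fin k → ℝ,
      (Finset.univ.filter (fun i => x i ≠ y i)).card = N →
      Antitone x → Antitone y →
      (∀ m : ℕ, 0 ≤ ∑ i ∈ Finset.univ.filter (fun i : Fin k => (i : ℕ) < m), (x i - y i)) →
      (∑ i, x i = ∑ i, y i) →
      hSym k (2*d) y ≤ hSym k (2*d) x := by
  intro N
  induction N using Nat.strong_induction_on with
  | _ N ih =>
    intro x y hcard hx hy hmaj hsum
    by_cases hD : (Finset.univ.filter (fun i => x i ≠ y i)) = ∅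
    · have hxy : x = y := by
        funext i
        by_contra h
        have hmem : i ∈ Finset.univ.filter (fun i => x i ≠ y i) :=
          Finset.mem_filter.mpr ⟨Finset.mem_univ i, h⟩
        rw [hD] at hmem
        exact absurd hmem (Finset.notMem_empty i)
      rw [hxy]
    · have hDne : (Finset.univ.filter (fun i => x i ≠ y i)).Nonempty :=
        Finset.nonempty_iff_ne_empty.mpr hD
      have hsum0 : ∑ i, (x i - y i) = 0 := by
        rw [Finset.sum_sub_distrib, hsum, sub_self]
      -- the set of indices where x < y is nonempty
      have hBne : (Finset.univ.filter (fun i => x i < y i)).Nonempty := by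
        by_contra hB
        rw [Finset.not_nonempty_iff_eq_empty] at hB
        have hge : ∀ i, 0 ≤ x i - y i := by
          intro i
          by_contra h
          push_neg at h
          have hmem : i ∈ Finset.univ.filter (fun i => x i < y i) :=
            Finset.mem_filter.mpr ⟨Finset.mem_univ i, by linarith⟩
          rw [hB] at hmem
          exact absurd hmem (Finset.notMem_empty i)
        obtain ⟨i, hi⟩ := hDne
        rw [Finset.mem_filter] at hi
        have := (Finset.sum_eq_zero_iff_of_nonneg (fun i _ => hge i)).mp hsum0 i (Finset.mem_univ i)
        exact hi.2 (by linarith)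
      set B := Finset.univ.filter (fun i => x i < y i) with hBdef
      set j0 := B.min' hBne with hj0def
      have hj0B : j0 ∈ B := B.min'_mem hBne
      have hj0 : x j0 < y j0 := (Finset.mem_filter.mp hj0B).2
      have hltj0 : ∀ r : Fin k, r < j0 → 0 ≤ x r - y r := by
        intro r hr
        by_contra h
        push_neg at h
        exact absurd (B.min'_le r (Finset.mem_filter.mpr ⟨Finset.mem_univ r, by linarith⟩))
          (not_le.mpr hr)
      -- the set of differing indices below j0 is nonempty
      set istar := (Finset.univ.filter (fun i => x i ≠ y i)).min' hDne with histardef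
      have histar : x istar ≠ y istar :=
        (Finset.mem_filter.mp ((Finset.univ.filter (fun i => x i ≠ y i)).min'_mem hDne)).2
      have histar_lt : istar < j0 := by
        have hle : istar ≤ j0 :=
          Finset.min'_le (Finset.univ.filter (fun i => x i ≠ y i)) j0
            (Finset.mem_filter.mpr ⟨Finset.mem_univ j0, ne_of_lt hj0⟩)
        rcases lt_or_eq_of_le hle with h | h
        · exact h
        · -- istar = j0 : then x istar < y istar; but sum of first istar+1 diffs ≥ 0 forces ≥
          exfalso
          have hminD : ∀ r : Fin k, r < istar → x r = y r := by
            intro r hr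
            by_contra hne
            exact absurd ((Finset.univ.filter (fun i => x i ≠ y i)).min'_le r
              (Finset.mem_filter.mpr ⟨Finset.mem_univ r, hne⟩)) (not_le.mpr hr)
          have hm := hmaj ((istar : ℕ) + 1)
          have heq : ∑ i ∈ Finset.univ.filter (fun i : Fin k => (i : ℕ) < (istar : ℕ) + 1),
              (x i - y i) = x istar - y istar := by
            refine Finset.sum_eq_single_of_mem istar
              (Finset.mem_filter.mpr ⟨Finset.mem_univ _, by omega⟩) ?_
            intro b hb hbne
            have hblt : b < istar := by
              rw [Finset.mem_filter] at hb
              have : (b : ℕ) < (istar : ℕ) + 1 := hb.2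
              have hbne' : (b : ℕ) ≠ (istar : ℕ) := fun hc => hbne (Fin.ext hc)
              exact Fin.lt_def.mpr (by omega)
            rw [hminD b hblt, sub_self]
          rw [heq] at hm
          rw [h] at hm
          linarith
      -- choose i0 : the largest differing index below j0
      have hAne : (Finset.univ.filter (fun i => i < j0 ∧ x i ≠ y i)).Nonempty :=
        ⟨istar, Finset.mem_filter.mpr ⟨Finset.mem_univ _, histar_lt, histar⟩⟩
      set A := Finset.univ.filter (fun i => i < j0 ∧ x i ≠ y i) with hAdef
      set i0 := A.max' hAne with hi0def
      have hi0A : i0 ∈ A := A.max'_mem hAne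
      have hi0lt : i0 < j0 := (Finset.mem_filter.mp hi0A).2.1
      have hi0ne : x i0 ≠ y i0 := (Finset.mem_filter.mp hi0A).2.2
      have hi0j0 : i0 ≠ j0 := ne_of_lt hi0lt
      have hbetween : ∀ m : Fin k, i0 < m → m < j0 → x m = y m := by
        intro m h1 h2
        by_contra h
        exact absurd (A.le_max' m (Finset.mem_filter.mpr ⟨Finset.mem_univ _, h2, h⟩))
          (not_le.mpr h1)
      have hgi0 : 0 < x i0 - y i0 :=
        lt_of_le_of_ne (hltj0 i0 hi0lt) (fun h => hi0ne (by linarith))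
      set δ := min (x i0 - y i0) (y j0 - x j0) with hδdef
      have hδpos : 0 < δ := lt_min hgi0 (by linarith)
      have hδ1 : δ ≤ x i0 - y i0 := min_le_left _ _
      have hδ2 : δ ≤ y j0 - x j0 := min_le_right _ _
      set x' : Fin k → ℝ := fun m => if m = i0 then x i0 - δ else if m = j0 then x j0 + δ else x m
        with hx'def
      have hx'i0 : x' i0 = x i0 - δ := by simp [hx'def]
      have hx'j0 : x' j0 = x j0 + δ := by simp [hx'def, hi0j0.symm]
      have hother : ∀ m, m ≠ i0 → m ≠ j0 → x' m = x m := by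
        intro m h1 h2; simp [hx'def, h1, h2]
      have hyj0i0 : y j0 ≤ y i0 := hy hi0lt.le
      have hf1 : y i0 ≤ x' i0 := by rw [hx'i0]; linarith
      have hf2 : x' j0 ≤ y j0 := by rw [hx'j0]; linarith
      have h2 : x j0 + δ ≤ x i0 - δ := by linarith
      -- x' is antitone
      have hx' : Antitone x' := by
        intro p q hpq
        rcases eq_or_lt_of_le hpq with rfl | hlt
        · exact le_refl _
        by_cases hq1 : q = i0
        · subst hq1
          have hp1 : p ≠ i0 := ne_of_lt hlt
          have hp2 : p ≠ j0 := ne_of_lt (lt_trans hlt hi0lt)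
          rw [hother p hp1 hp2, hx'i0]
          have := hx hlt.le
          linarith
        by_cases hq2 : q = j0
        · subst hq2
          by_cases hp1 : p = i0
          · subst hp1; linarith
          · have hp2 : p ≠ j0 := ne_of_lt hlt
            rw [hother p hp1 hp2]
            rcases lt_trichotomy p i0 with hpi | hpi | hpi
            · have := hx hpi.le
              linarith
            · exact absurd hpi hp1
            · rw [hbetween p hpi hlt]
              have := hy hlt.le
              linarith
        · -- q not special
          rw [hother q hq1 hq2]
          by_cases hp1 : p = i0
          · subst hp1
            have hqi : i0 < q := hlt
            rcases lt_trichotomy q j0 with hqj | hqj | hqj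
            · rw [hbetween q hqi hqj, hx'i0]
              have := hy hqi.le
              linarith
            · exact absurd hqj hq2
            · have := hx hqj.le
              rw [hx'i0]
              have hyy := hy hqi.le
              have hbet := hy (le_of_lt hi0lt)
              linarith [hy (le_of_lt hqi)]
          by_cases hp2 : p = j0
          · subst hp2
            have := hx hlt.le
            rw [hx'j0]
            linarith
          · rw [hother p hp1 hp2]
            exact hx hpq
      -- sum decomposition for x' - x
      have hdiffsum : ∀ F : Finset (Fin k),
          ∑ i ∈ F, (x' i - x i)
            = (if i0 ∈ F then -δ else 0) + (if j0 ∈ F then δ else 0) := by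
        intro F
        have hpt : ∀ i, x' i - x i = (if i = i0 then -δ else 0) + (if i = j0 then δ else 0) := by
          intro i
          by_cases h1 : i = i0
          · subst h1
            rw [hx'i0, if_pos rfl, if_neg hi0j0]
            ring
          by_cases h2 : i = j0
          · subst h2
            rw [hx'j0, if_neg h1, if_pos rfl]
            ring
          · rw [hother i h1 h2, if_neg h1, if_neg h2]
            ring
        rw [Finset.sum_congr rfl (fun i _ => hpt i), Finset.sum_add_distrib,
          Finset.sum_ite_eq' F i0 (fun _ => -δ), Finset.sum_ite_eq' F j0 (fun _ => δ)]
      -- majorization is preserved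
      have hmaj' : ∀ m : ℕ,
          0 ≤ ∑ i ∈ Finset.univ.filter (fun i : Fin k => (i : ℕ) < m), (x' i - y i) := by
        intro m
        set F := Finset.univ.filter (fun i : Fin k => (i : ℕ) < m) with hFdef
        have hsplit : ∑ i ∈ F, (x' i - y i) = ∑ i ∈ F, (x i - y i) + ∑ i ∈ F, (x' i - x i) := by
          rw [← Finset.sum_add_distrib]
          exact Finset.sum_congr rfl (fun i _ => by ring)
        rw [hsplit, hdiffsum F]
        have hi0mem : i0 ∈ F ↔ (i0 : ℕ) < m := by simp [hFdef]
        have hj0mem : j0 ∈ F ↔ (j0 : ℕ) < m := by simp [hFdef]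
        have hij : (i0 : ℕ) < (j0 : ℕ) := hi0lt
        by_cases hmi : (i0 : ℕ) < m
        · by_cases hmj : (j0 : ℕ) < m
          · rw [if_pos (hi0mem.mpr hmi), if_pos (hj0mem.mpr hmj)]
            have := hmaj m
            linarith
          · rw [if_pos (hi0mem.mpr hmi), if_neg (fun h => hmj (hj0mem.mp h))]
            have hsub : {i0} ⊆ F := Finset.singleton_subset_iff.mpr (hi0mem.mpr hmi)
            have hlower : ∑ i ∈ ({i0} : Finset (Fin k)), (x i - y i) ≤ ∑ i ∈ F, (x i - y i) := by
              refine Finset.sum_le_sum_of_subset_of_nonneg hsub (fun r hr _ => ?_)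
              refine hltj0 r ?_
              have hrm : (r : ℕ) < m := (Finset.mem_filter.mp hr).2
              exact Fin.lt_def.mpr (by omega)
            rw [Finset.sum_singleton] at hlower
            linarith
        · have hmj : ¬ (j0 : ℕ) < m := by omega
          rw [if_neg (fun h => hmi (hi0mem.mp h)), if_neg (fun h => hmj (hj0mem.mp h))]
          have := hmaj m
          linarith
      -- total sums agree
      have hsum' : ∑ i, x' i = ∑ i, y i := by
        have h := hdiffsum Finset.univ
        rw [if_pos (Finset.mem_univ i0), if_pos (Finset.mem_univ j0)] at h
        have h2' : ∑ i, x' i - ∑ i, x i = 0 := by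
          rw [← Finset.sum_sub_distrib]
          rw [h]; ring
        linarith
      -- the set of differing indices strictly decreases
      have hsubset : Finset.univ.filter (fun i => x' i ≠ y i)
          ⊆ Finset.univ.filter (fun i => x i ≠ y i) := by
        intro i hi
        rw [Finset.mem_filter] at hi ⊢
        refine ⟨Finset.mem_univ i, ?_⟩
        by_cases h1 : i = i0
        · subst h1; exact hi0ne
        by_cases h2 : i = j0
        · subst h2; exact ne_of_lt hj0
        · rw [hother i h1 h2] at hi; exact hi.2
      have hproper : ∃ i ∈ Finset.univ.filter (fun i => x i ≠ y i),
          i ∉ Finset.univ.filter (fun i => x' i ≠ y i) := by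
        rcases le_total (x i0 - y i0) (y j0 - x j0) with hc | hc
        · refine ⟨i0, Finset.mem_filter.mpr ⟨Finset.mem_univ _, hi0ne⟩, ?_⟩
          rw [Finset.mem_filter]
          push_neg
          intro _
          rw [hx'i0, hδdef, min_eq_left hc]
          ring
        · refine ⟨j0, Finset.mem_filter.mpr ⟨Finset.mem_univ _, ne_of_lt hj0⟩, ?_⟩
          rw [Finset.mem_filter]
          push_neg
          intro _
          rw [hx'j0, hδdef, min_eq_right hc]
          ring
      have hltN : (Finset.univ.filter (fun i => x' i ≠ y i)).card < N := by
        rw [← hcard]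
        exact Finset.card_lt_card ((Finset.ssubset_iff_of_subset hsubset).mpr hproper)
      have hstep := hSym_transfer k d hd x x' i0 j0 hi0j0 δ hδpos.le h2 hx'i0 hx'j0 hother
      have hrec := ih _ hltN x' y rfl hx' hy hmaj' hsum'
      linarith

/-- Schur convexity of complete homogeneous symmetric polynomials of even degree:
if `(x_1, …, x_k)` majorises `(y_1, …, y_k)` (both sorted decreasingly), then
`h_{2d}(x) ≥ h_{2d}(y)`. -/
theorem hSym_schur_convex (k : ℕ) (hk : 1 ≤ k) (x y : Fin k → ℝ)
    (hx : Antitone x) (hy : Antitone y)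
    (hmaj : ∀ j : ℕ, j < k →
      ∑ i ∈ Finset.univ.filter (fun i : Fin k => (i : ℕ) < j), y i ≤
        ∑ i ∈ Finset.univ.filter (fun i : Fin k => (i : ℕ) < j), x i)
    (hsum : ∑ i, x i = ∑ i, y i)
    (d : ℕ) (hd : 1 ≤ d) :
    hSym k (2 * d) y ≤ hSym k (2 * d) x := by
  refine schur_aux k d hd _ x y rfl hx hy (fun m => ?_) hsum
  rw [Finset.sum_sub_distrib, sub_nonneg]
  by_cases hm : m < k
  · exact hmaj m hm
  · have hfull : Finset.univ.filter (fun i : Fin k => (i : ℕ) < m) = Finset.univ := by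
      refine Finset.filter_true_of_mem (fun i _ => lt_of_lt_of_le i.isLt (by omega))
    rw [hfull]
    exact le_of_eq hsum.symm
end
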